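/- Let K_1, K_2, K_3 be finite-dimensional complex inner product spaces, A_1 an operator on K_1 with operator norm at most 1, and A_3 an operator on K_3 with operator norm at most 1. Then for all operators T on K_2 ⊗ K_3 and S on K_1 ⊗ K_2 each with trace norm at most 1, the trace norm of (A_1 ⊗ T)(S ⊗ A_3) is at most 1. -/

import Mathlib

open Finset Matrix
open scoped Kronecker ComplexOrder

/-- `x` majorizes `y`: every subset-sum of `y` is dominated by some subset-sum of `x`
of the same cardinality (equivalently, all top-`k` partial sums of the non-increasing
rearrangements dominate), and the total sums agree. -/
def Majorizes {ι κ : Type*} [Fintype ι] [Fintype κ] (x : ι → ℝ) (y : κ → ℝ) : Prop :=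
  (∀ t : Finset κ, ∃ s : Finset ι, s.card = t.card ∧ ∑ j ∈ t, y j ≤ ∑ i ∈ s, x i) ∧
    ∑ j, y j = ∑ i, x i
/-- The trace norm `tr √(M* M)` (sum of singular values) of a matrix. -/
noncomputable def traceNorm {m n : Type*} [Fintype m] [Fintype n] [DecidableEq n]
    (M : Matrix m n ℂ) : ℝ :=
  ∑ i, Real.sqrt ((Matrix.isHermitian_conjTranspose_mul_self M).eigenvalues i)

/-- The operator norm (largest singular value) of a matrix. -/
noncomputable def specNorm {m n : Type*} [Fintype m] [Fintype n] [DecidableEq n]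
    (M : Matrix m n ℂ) : ℝ :=
  ⨆ i, Real.sqrt ((Matrix.isHermitian_conjTranspose_mul_self M).eigenvalues i)

set_option linter.unusedSectionVars false
set_option maxHeartbeats 1000000

namespace TNAux

noncomputable section

variable {n : Type*} [Fintype n] {m : Type*} [Fintype m]

/-- view a plain vector as an element of `EuclideanSpace ℂ n`. -/
def ev (v : n → ℂ) : EuclideanSpace ℂ n := (WithLp.equiv 2 (n → ℂ)).symm v

lemma ev_coe (x : EuclideanSpace ℂ n) : ev (⇑x) = x := rfl

lemma inner_ev (x y : n → ℂ) : (inner ℂ (ev x) (ev y) : ℂ) = star x ⬝ᵥ y := by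
  simp [ev, PiLp.inner_apply, dotProduct, RCLike.inner_apply, mul_comm]

lemma norm_ev_sq (v : n → ℂ) : ‖ev v‖ ^ 2 = ∑ i, ‖v i‖ ^ 2 := by
  rw [EuclideanSpace.norm_eq, Real.sq_sqrt (by positivity)]
  rfl

lemma norm_ev_sq' (v : n → ℂ) : ‖ev v‖ ^ 2 = RCLike.re (star v ⬝ᵥ v) := by
  rw [← inner_ev, ← norm_sq_eq_re_inner (𝕜 := ℂ)]

lemma dot_assoc (B : Matrix m n ℂ) (x : m → ℂ) (y : n → ℂ) :
    star (Bᴴ *ᵥ x) ⬝ᵥ y = star x ⬝ᵥ (B *ᵥ y) := by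
  rw [star_mulVec, conjTranspose_conjTranspose, ← dotProduct_mulVec]

lemma specNorm_nonneg [DecidableEq n] (A : Matrix m n ℂ) : 0 ≤ specNorm A :=
  Real.iSup_nonneg fun _ => Real.sqrt_nonneg _

lemma sqrt_eigen_le [DecidableEq n] (A : Matrix m n ℂ) (i : n) :
    Real.sqrt ((Matrix.isHermitian_conjTranspose_mul_self A).eigenvalues i) ≤ specNorm A := by
  exact le_ciSup (f := fun i => Real.sqrt ((Matrix.isHermitian_conjTranspose_mul_self A).eigenvalues i))
    (Set.Finite.bddAbove (Set.finite_range _)) i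

lemma eigen_le_sq [DecidableEq n] (A : Matrix m n ℂ) (i : n) :
    (Matrix.isHermitian_conjTranspose_mul_self A).eigenvalues i ≤ specNorm A ^ 2 := by
  have h0 := Matrix.eigenvalues_conjTranspose_mul_self_nonneg A i
  calc (Matrix.isHermitian_conjTranspose_mul_self A).eigenvalues i
      = Real.sqrt ((Matrix.isHermitian_conjTranspose_mul_self A).eigenvalues i) ^ 2 :=
      (Real.sq_sqrt h0).symm
    _ ≤ specNorm A ^ 2 := by
        have := sqrt_eigen_le A i
        exact pow_le_pow_left₀ (Real.sqrt_nonneg _) this 2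

lemma norm_mulVec_le [DecidableEq n] (A : Matrix m n ℂ) (v : n → ℂ) :
    ‖ev (A *ᵥ v)‖ ≤ specNorm A * ‖ev v‖ := by
  have hH := Matrix.isHermitian_conjTranspose_mul_self A
  set U : Matrix n n ℂ := (Matrix.IsHermitian.eigenvectorUnitary hH : Matrix n n ℂ) with hU
  have hUU : U * star U = 1 := (Matrix.mem_unitaryGroup_iff).mp
    (Matrix.IsHermitian.eigenvectorUnitary hH).2
  set c : n → ℂ := Uᴴ *ᵥ v with hc
  have hvc : U *ᵥ c = v := by
    rw [hc, mulVec_mulVec, ← star_eq_conjTranspose, hUU, one_mulVec]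
  -- squared norm of A v equals ∑ λ_i ‖c i‖²
  have key : ‖ev (A *ᵥ v)‖ ^ 2 = ∑ i, hH.eigenvalues i * ‖c i‖ ^ 2 := by
    rw [norm_ev_sq']
    have h1 : star (A *ᵥ v) ⬝ᵥ (A *ᵥ v) = star v ⬝ᵥ ((Aᴴ * A) *ᵥ v) := by
      rw [star_mulVec, ← dotProduct_mulVec, mulVec_mulVec]
    rw [h1]
    conv_lhs => rw [Matrix.IsHermitian.spectral_theorem hH, Unitary.conjStarAlgAut_apply, ← hU]
    have h2 : (U * Matrix.diagonal (RCLike.ofReal ∘ hH.eigenvalues) * star U) *ᵥ v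
        = U *ᵥ (Matrix.diagonal (RCLike.ofReal ∘ hH.eigenvalues) *ᵥ c) := by
      rw [hc, ← mulVec_mulVec, ← mulVec_mulVec, star_eq_conjTranspose]
    rw [h2, ← dot_assoc U]
    simp only [← hc, dotProduct, mulVec_diagonal, Function.comp_apply, Pi.star_apply,
      Complex.star_def, map_sum]
    refine Finset.sum_congr rfl fun i _ => ?_
    rw [mul_left_comm]
    have h4 : (starRingEnd ℂ) (c i) * c i = (RCLike.ofReal (‖c i‖ ^ 2) : ℂ) := by
      rw [mul_comm, Complex.mul_conj]
      norm_cast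
      rw [Complex.normSq_eq_norm_sq]
      rfl
    rw [h4, ← RCLike.ofReal_mul, RCLike.ofReal_re]
  have hcle : ∑ i, hH.eigenvalues i * ‖c i‖ ^ 2 ≤ specNorm A ^ 2 * ‖ev c‖ ^ 2 := by
    rw [norm_ev_sq, Finset.mul_sum]
    refine Finset.sum_le_sum fun i _ => ?_
    exact mul_le_mul_of_nonneg_right (eigen_le_sq A i) (by positivity)
  have hcv : ‖ev c‖ ^ 2 = ‖ev v‖ ^ 2 := by
    rw [norm_ev_sq', norm_ev_sq', hc, dot_assoc U v (Uᴴ *ᵥ v), mulVec_mulVec,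
      show U * Uᴴ = 1 from hUU, one_mulVec]
  have hfin : ‖ev (A *ᵥ v)‖ ^ 2 ≤ (specNorm A * ‖ev v‖) ^ 2 := by
    rw [key, mul_pow]
    calc ∑ i, hH.eigenvalues i * ‖c i‖ ^ 2 ≤ specNorm A ^ 2 * ‖ev c‖ ^ 2 := hcle
      _ = specNorm A ^ 2 * ‖ev v‖ ^ 2 := by rw [hcv]
  have h2 := Real.sqrt_le_sqrt hfin
  rwa [Real.sqrt_sq (norm_nonneg _),
    Real.sqrt_sq (mul_nonneg (specNorm_nonneg A) (norm_nonneg _))] at h2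

lemma ev_zero : ev (0 : n → ℂ) = 0 := rfl

lemma ev_smul (c : ℂ) (x : n → ℂ) : ev (c • x) = c • ev x := rfl

lemma norm_conjTranspose_mulVec_le [DecidableEq n] (A : Matrix m n ℂ) (v : m → ℂ) :
    ‖ev (Aᴴ *ᵥ v)‖ ≤ specNorm A * ‖ev v‖ := by
  set w : n → ℂ := Aᴴ *ᵥ v with hw
  have h1 : ‖ev w‖ ^ 2 ≤ (specNorm A * ‖ev v‖) * ‖ev w‖ := by
    rw [norm_ev_sq', hw, dot_assoc A v w, ← inner_ev]
    calc RCLike.re (inner ℂ (ev v) (ev (A *ᵥ w)) : ℂ)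
        ≤ ‖(inner ℂ (ev v) (ev (A *ᵥ w)) : ℂ)‖ := RCLike.re_le_norm _
      _ ≤ ‖ev v‖ * ‖ev (A *ᵥ w)‖ := norm_inner_le_norm _ _
      _ ≤ ‖ev v‖ * (specNorm A * ‖ev w‖) := by
          exact mul_le_mul_of_nonneg_left (norm_mulVec_le A w) (norm_nonneg _)
      _ = (specNorm A * ‖ev v‖) * ‖ev w‖ := by ring
  rcases eq_or_lt_of_le (norm_nonneg (ev w)) with h0 | h0
  · rw [← h0]
    exact mul_nonneg (specNorm_nonneg A) (norm_nonneg _)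
  · rw [pow_two] at h1
    exact le_of_mul_le_mul_right h1 h0

lemma norm_ev_basis [DecidableEq n] {H : Matrix n n ℂ} (hH : H.IsHermitian) (i : n) :
    ‖ev (⇑(hH.eigenvectorBasis i))‖ = 1 := hH.eigenvectorBasis.orthonormal.1 i

lemma norm_mulVec_basis [DecidableEq n] (B : Matrix m n ℂ) (i : n) :
    ‖ev (B *ᵥ ⇑((Matrix.isHermitian_conjTranspose_mul_self B).eigenvectorBasis i))‖
      = Real.sqrt ((Matrix.isHermitian_conjTranspose_mul_self B).eigenvalues i) := by
  set hH := Matrix.isHermitian_conjTranspose_mul_self B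
  set w : n → ℂ := ⇑(hH.eigenvectorBasis i) with hwdef
  have hsq : ‖ev (B *ᵥ w)‖ ^ 2 = hH.eigenvalues i := by
    rw [norm_ev_sq']
    have h1 : star (B *ᵥ w) ⬝ᵥ (B *ᵥ w) = star w ⬝ᵥ ((Bᴴ * B) *ᵥ w) := by
      rw [star_mulVec, ← dotProduct_mulVec, mulVec_mulVec]
    rw [h1, hH.mulVec_eigenvectorBasis i]
    have h2 : star w ⬝ᵥ (hH.eigenvalues i • w) = hH.eigenvalues i • (star w ⬝ᵥ w) := by
      rw [dotProduct_smul]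
    rw [h2, RCLike.smul_re, ← norm_ev_sq', norm_ev_basis hH i]
    ring
  rw [← hsq, Real.sqrt_sq (norm_nonneg _)]

lemma matrix_decomp [DecidableEq n] (B : Matrix m n ℂ) (a : m) (b : n) :
    B a b = ∑ i, (B *ᵥ ⇑((Matrix.isHermitian_conjTranspose_mul_self B).eigenvectorBasis i)) a
      * star (⇑((Matrix.isHermitian_conjTranspose_mul_self B).eigenvectorBasis i) b) := by
  set hH := Matrix.isHermitian_conjTranspose_mul_self B
  set U : Matrix n n ℂ := (Matrix.IsHermitian.eigenvectorUnitary hH : Matrix n n ℂ) with hU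
  have hUU : U * star U = 1 := (Matrix.mem_unitaryGroup_iff).mp
    (Matrix.IsHermitian.eigenvectorUnitary hH).2
  have h1 : B = B * U * star U := by rw [Matrix.mul_assoc, hUU, Matrix.mul_one]
  conv_lhs => rw [h1]
  rw [mul_apply]
  refine Finset.sum_congr rfl fun i _ => ?_
  simp [mul_apply, mulVec, dotProduct, star_apply, hU,
    Matrix.IsHermitian.eigenvectorUnitary_apply]

lemma traceNorm_nonneg [DecidableEq n] (M : Matrix m n ℂ) : 0 ≤ traceNorm M :=
  Finset.sum_nonneg fun _ _ => Real.sqrt_nonneg _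

lemma traceNorm_le_decomp {ι : Type*} [Fintype ι] [DecidableEq n]
    (M : Matrix m n ℂ) (p : ι → m → ℂ) (q : ι → n → ℂ)
    (hM : ∀ a b, M a b = ∑ i, p i a * star (q i b)) :
    traceNorm M ≤ ∑ i, ‖ev (p i)‖ * ‖ev (q i)‖ := by
  classical
  set hH := Matrix.isHermitian_conjTranspose_mul_self M with hHdef
  set v : n → n → ℂ := fun r => ⇑(hH.eigenvectorBasis r) with hv
  set σ : n → ℝ := fun r => Real.sqrt (hH.eigenvalues r) with hσ
  have hlam : ∀ r, 0 ≤ hH.eigenvalues r :=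
    Matrix.eigenvalues_conjTranspose_mul_self_nonneg M
  have hσnn : ∀ r, 0 ≤ σ r := fun r => Real.sqrt_nonneg _
  have hMv : ∀ r, ‖ev (M *ᵥ v r)‖ = σ r := fun r => norm_mulVec_basis M r
  set u : n → m → ℂ := fun r =>
    if hH.eigenvalues r = 0 then 0 else ((σ r)⁻¹ : ℝ) • (M *ᵥ v r) with hu
  -- inner products ⟪M v r, M v s⟫
  have hMM : ∀ r s, (inner ℂ (ev (M *ᵥ v r)) (ev (M *ᵥ v s)) : ℂ)
      = ((hH.eigenvalues s : ℝ) : ℂ) * (inner ℂ (ev (v r)) (ev (v s)) : ℂ) := by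
    intro r s
    rw [inner_ev, inner_ev]
    have h1 : star (M *ᵥ v r) ⬝ᵥ (M *ᵥ v s) = star (v r) ⬝ᵥ ((Mᴴ * M) *ᵥ v s) := by
      rw [star_mulVec, ← dotProduct_mulVec, mulVec_mulVec]
    rw [h1, hH.mulVec_eigenvectorBasis s]
    rw [show (hH.eigenvalues s • (v s) : n → ℂ) = ((hH.eigenvalues s : ℝ) : ℂ) • v s by
      ext j; simp [Complex.real_smul]]
    rw [dotProduct_smul, smul_eq_mul]
  have hvorth : ∀ r s, (inner ℂ (ev (v r)) (ev (v s)) : ℂ) = if r = s then 1 else 0 := by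
    intro r s
    have := (orthonormal_iff_ite.mp hH.eigenvectorBasis.orthonormal) r s
    exact this
  -- σ r as an inner product
  have hσr : ∀ r, σ r = RCLike.re (inner ℂ (ev (u r)) (ev (M *ᵥ v r)) : ℂ) := by
    intro r
    by_cases h : hH.eigenvalues r = 0
    · simp [hu, h, ev_zero, hσ]
    · have hσpos : 0 < σ r := Real.sqrt_pos.mpr (lt_of_le_of_ne (hlam r) (Ne.symm h))
      rw [hu]
      simp only [h, if_false]
      rw [show (((σ r)⁻¹ : ℝ) • (M *ᵥ v r) : m → ℂ) = (((σ r)⁻¹ : ℝ) : ℂ) • (M *ᵥ v r) by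
        ext j; simp [Complex.real_smul]]
      rw [ev_smul, inner_smul_left, hMM r r, hvorth r r, if_pos rfl, mul_one]
      rw [Complex.conj_ofReal]
      rw [show ((hH.eigenvalues r : ℝ) : ℂ) = ((σ r * σ r : ℝ) : ℂ) by
        rw [← Real.mul_self_sqrt (hlam r)]]
      rw [← Complex.ofReal_mul]
      rw [show RCLike.re ((((σ r)⁻¹ * (σ r * σ r) : ℝ)) : ℂ) = (σ r)⁻¹ * (σ r * σ r)
        from Complex.ofReal_re _]
      field_simp
  -- orthonormality of the nonzero u's
  have huorth : Orthonormal ℂ (fun r : {r : n // hH.eigenvalues r ≠ 0} => ev (u r)) := by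
    rw [orthonormal_iff_ite]
    rintro ⟨r, hr⟩ ⟨s, hs⟩
    have hσr' : (0:ℝ) < σ r := Real.sqrt_pos.mpr (lt_of_le_of_ne (hlam r) (Ne.symm hr))
    have hσs' : (0:ℝ) < σ s := Real.sqrt_pos.mpr (lt_of_le_of_ne (hlam s) (Ne.symm hs))
    simp only [hu, hr, hs, if_false]
    rw [show (((σ r)⁻¹ : ℝ) • (M *ᵥ v r) : m → ℂ) = (((σ r)⁻¹ : ℝ) : ℂ) • (M *ᵥ v r) by
        ext j; simp [Complex.real_smul],
      show (((σ s)⁻¹ : ℝ) • (M *ᵥ v s) : m → ℂ) = (((σ s)⁻¹ : ℝ) : ℂ) • (M *ᵥ v s) by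
        ext j; simp [Complex.real_smul]]
    rw [ev_smul, ev_smul, inner_smul_left, inner_smul_right, hMM r s, hvorth r s]
    rw [Complex.conj_ofReal]
    by_cases hrs : r = s
    · subst hrs
      simp only [if_pos rfl, Subtype.mk.injEq]
      rw [show ((hH.eigenvalues r : ℝ) : ℂ) = ((σ r * σ r : ℝ) : ℂ) by
        rw [← Real.mul_self_sqrt (hlam r)]]
      push_cast
      field_simp
    · have : (⟨r, hr⟩ : {r : n // hH.eigenvalues r ≠ 0}) ≠ ⟨s, hs⟩ := by
        simp [Subtype.mk.injEq, hrs]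
      simp [hrs, this]
  -- Bessel for the family u
  have hbessel : ∀ x : m → ℂ,
      ∑ r, ‖(inner ℂ (ev (u r)) (ev x) : ℂ)‖ ^ 2 ≤ ‖ev x‖ ^ 2 := by
    intro x
    have h1 := huorth.sum_inner_products_le (s := Finset.univ) (ev x)
    calc ∑ r, ‖(inner ℂ (ev (u r)) (ev x) : ℂ)‖ ^ 2
        = ∑ r ∈ Finset.univ.filter (fun r => hH.eigenvalues r ≠ 0),
            ‖(inner ℂ (ev (u r)) (ev x) : ℂ)‖ ^ 2 := by
          symm
          refine Finset.sum_filter_of_ne fun r _ hne h0 => hne ?_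
          simp [hu, h0, ev_zero]
      _ = ∑ r : {r : n // hH.eigenvalues r ≠ 0},
            ‖(inner ℂ (ev (u r)) (ev x) : ℂ)‖ ^ 2 := by
          exact Finset.sum_subtype _ (by simp) _
      _ ≤ ‖ev x‖ ^ 2 := h1
  -- Bessel for v
  have hbesselv : ∀ x : n → ℂ,
      ∑ r, ‖(inner ℂ (ev (x)) (ev (v r)) : ℂ)‖ ^ 2 ≤ ‖ev x‖ ^ 2 := by
    intro x
    have h1 := hH.eigenvectorBasis.orthonormal.sum_inner_products_le
      (s := Finset.univ) (ev x)
    calc ∑ r, ‖(inner ℂ (ev x) (ev (v r)) : ℂ)‖ ^ 2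
        = ∑ r, ‖(inner ℂ (ev (v r)) (ev x) : ℂ)‖ ^ 2 := by
          refine Finset.sum_congr rfl fun r _ => ?_
          rw [← inner_conj_symm, RCLike.norm_conj]
      _ ≤ ‖ev x‖ ^ 2 := h1
  -- expansion of the inner products via the decomposition
  have key : ∀ r, (inner ℂ (ev (u r)) (ev (M *ᵥ v r)) : ℂ)
      = ∑ i, (inner ℂ (ev (u r)) (ev (p i)) : ℂ) * (inner ℂ (ev (q i)) (ev (v r)) : ℂ) := by
    intro r
    calc (inner ℂ (ev (u r)) (ev (M *ᵥ v r)) : ℂ)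
        = ∑ a, star (u r a) * (∑ b, M a b * v r b) := by
          rw [inner_ev]
          simp only [dotProduct, mulVec, Pi.star_apply]
      _ = ∑ a, ∑ b, star (u r a) * (M a b * v r b) := by
          simp [Finset.mul_sum]
      _ = ∑ a, ∑ b, ∑ i, star (u r a) * (p i a * star (q i b) * v r b) := by
          refine Finset.sum_congr rfl fun a _ => Finset.sum_congr rfl fun b _ => ?_
          rw [hM a b, Finset.sum_mul, Finset.mul_sum]
      _ = ∑ a, ∑ i, ∑ b, star (u r a) * (p i a * star (q i b) * v r b) :=
          Finset.sum_congr rfl fun a _ => Finset.sum_comm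
      _ = ∑ i, ∑ a, ∑ b, star (u r a) * (p i a * star (q i b) * v r b) :=
          Finset.sum_comm
      _ = ∑ i, (∑ a, star (u r a) * p i a) * (∑ b, star (q i b) * v r b) := by
          refine Finset.sum_congr rfl fun i _ => ?_
          rw [Finset.sum_mul]
          refine Finset.sum_congr rfl fun a _ => ?_
          rw [Finset.mul_sum]
          refine Finset.sum_congr rfl fun b _ => ?_
          ring
      _ = ∑ i, (inner ℂ (ev (u r)) (ev (p i)) : ℂ) * (inner ℂ (ev (q i)) (ev (v r)) : ℂ) := by
          simp only [inner_ev, dotProduct, Pi.star_apply]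
  -- assemble
  have htr : traceNorm M = ∑ r, σ r := rfl
  rw [htr]
  calc ∑ r, σ r
      = ∑ r, RCLike.re (∑ i, (inner ℂ (ev (u r)) (ev (p i)) : ℂ)
          * (inner ℂ (ev (q i)) (ev (v r)) : ℂ)) := by
        refine Finset.sum_congr rfl fun r _ => ?_
        rw [← key r, ← hσr r]
    _ ≤ ∑ r, ∑ i, ‖(inner ℂ (ev (u r)) (ev (p i)) : ℂ)‖
          * ‖(inner ℂ (ev (q i)) (ev (v r)) : ℂ)‖ := by
        refine Finset.sum_le_sum fun r _ => ?_
        calc RCLike.re (∑ i, (inner ℂ (ev (u r)) (ev (p i)) : ℂ)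
              * (inner ℂ (ev (q i)) (ev (v r)) : ℂ))
            ≤ ‖∑ i, (inner ℂ (ev (u r)) (ev (p i)) : ℂ)
              * (inner ℂ (ev (q i)) (ev (v r)) : ℂ)‖ := RCLike.re_le_norm _
          _ ≤ ∑ i, ‖(inner ℂ (ev (u r)) (ev (p i)) : ℂ)
              * (inner ℂ (ev (q i)) (ev (v r)) : ℂ)‖ := norm_sum_le _ _
          _ = ∑ i, ‖(inner ℂ (ev (u r)) (ev (p i)) : ℂ)‖
              * ‖(inner ℂ (ev (q i)) (ev (v r)) : ℂ)‖ := by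
              simp [norm_mul]
    _ = ∑ i, ∑ r, ‖(inner ℂ (ev (u r)) (ev (p i)) : ℂ)‖
          * ‖(inner ℂ (ev (q i)) (ev (v r)) : ℂ)‖ := Finset.sum_comm
    _ ≤ ∑ i, ‖ev (p i)‖ * ‖ev (q i)‖ := by
        refine Finset.sum_le_sum fun i _ => ?_
        have hCS := Finset.sum_mul_sq_le_sq_mul_sq Finset.univ
          (fun r => ‖(inner ℂ (ev (u r)) (ev (p i)) : ℂ)‖)
          (fun r => ‖(inner ℂ (ev (q i)) (ev (v r)) : ℂ)‖)
        have hnn : (0:ℝ) ≤ ∑ r, ‖(inner ℂ (ev (u r)) (ev (p i)) : ℂ)‖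
            * ‖(inner ℂ (ev (q i)) (ev (v r)) : ℂ)‖ :=
          Finset.sum_nonneg fun r _ => mul_nonneg (norm_nonneg _) (norm_nonneg _)
        have h2 : (∑ r, ‖(inner ℂ (ev (u r)) (ev (p i)) : ℂ)‖
            * ‖(inner ℂ (ev (q i)) (ev (v r)) : ℂ)‖) ^ 2
            ≤ (‖ev (p i)‖ * ‖ev (q i)‖) ^ 2 := by
          calc (∑ r, ‖(inner ℂ (ev (u r)) (ev (p i)) : ℂ)‖
              * ‖(inner ℂ (ev (q i)) (ev (v r)) : ℂ)‖) ^ 2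
              ≤ (∑ r, ‖(inner ℂ (ev (u r)) (ev (p i)) : ℂ)‖ ^ 2)
                * (∑ r, ‖(inner ℂ (ev (q i)) (ev (v r)) : ℂ)‖ ^ 2) := hCS
            _ ≤ ‖ev (p i)‖ ^ 2 * ‖ev (q i)‖ ^ 2 := by
                refine mul_le_mul (hbessel (p i)) (hbesselv (q i))
                  (Finset.sum_nonneg fun r _ => by positivity) (by positivity)
            _ = (‖ev (p i)‖ * ‖ev (q i)‖) ^ 2 := by ring
        have h3 := Real.sqrt_le_sqrt h2
        rwa [Real.sqrt_sq hnn,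
          Real.sqrt_sq (mul_nonneg (norm_nonneg _) (norm_nonneg _))] at h3

lemma norm_ev_prod {α β : Type*} [Fintype α] [Fintype β] (f : α → ℂ) (g : β → ℂ) :
    ‖ev (fun x : α × β => f x.1 * g x.2)‖ = ‖ev f‖ * ‖ev g‖ := by
  have h : ‖ev (fun x : α × β => f x.1 * g x.2)‖ ^ 2 = (‖ev f‖ * ‖ev g‖) ^ 2 := by
    rw [norm_ev_sq, mul_pow, norm_ev_sq, norm_ev_sq, Fintype.sum_prod_type,
      Finset.sum_mul_sum]
    simp [norm_mul, mul_pow]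
  have h2 := congrArg Real.sqrt h
  rwa [Real.sqrt_sq (norm_nonneg _),
    Real.sqrt_sq (mul_nonneg (norm_nonneg _) (norm_nonneg _))] at h2

lemma norm_ev_prod' {α β γ : Type*} [Fintype α] [Fintype β] [Fintype γ]
    (f : α × β → ℂ) (g : γ → ℂ) :
    ‖ev (fun x : α × β × γ => f (x.1, x.2.1) * g x.2.2)‖ = ‖ev f‖ * ‖ev g‖ := by
  have h : ‖ev (fun x : α × β × γ => f (x.1, x.2.1) * g x.2.2)‖ ^ 2
      = (‖ev f‖ * ‖ev g‖) ^ 2 := by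
    rw [norm_ev_sq, mul_pow, norm_ev_sq, norm_ev_sq, Fintype.sum_prod_type,
      Finset.sum_mul_sum]
    simp only [Fintype.sum_prod_type, norm_mul, mul_pow, Finset.sum_mul, Finset.mul_sum]
  have h2 := congrArg Real.sqrt h
  rwa [Real.sqrt_sq (norm_nonneg _),
    Real.sqrt_sq (mul_nonneg (norm_nonneg _) (norm_nonneg _))] at h2

lemma sum_slice_snd {α β : Type*} [Fintype α] [Fintype β] (w : α × β → ℂ) :
    ∑ h, ‖ev (fun g : α => w (g, h))‖ ^ 2 = ‖ev w‖ ^ 2 := by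
  simp only [norm_ev_sq, Fintype.sum_prod_type]
  exact Finset.sum_comm

lemma sum_slice_fst {α β : Type*} [Fintype α] [Fintype β] (w : α × β → ℂ) :
    ∑ h, ‖ev (fun k : β => w (h, k))‖ ^ 2 = ‖ev w‖ ^ 2 := by
  simp only [norm_ev_sq, Fintype.sum_prod_type]

end

end TNAux

open TNAux

/-- if `‖A₁‖ ≤ 1`, `‖A₃‖ ≤ 1` and `T`, `S` have trace norm at most 1,
then `(A₁ ⊗ T)(S ⊗ A₃)` has trace norm at most 1. -/
theorem trace_norm_product_bound {m₁ m₂ m₃ : Type*}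
    [Fintype m₁] [DecidableEq m₁] [Fintype m₂] [DecidableEq m₂]
    [Fintype m₃] [DecidableEq m₃]
    (A₁ : Matrix m₁ m₁ ℂ) (A₃ : Matrix m₃ m₃ ℂ)
    (hA₁ : specNorm A₁ ≤ 1) (hA₃ : specNorm A₃ ≤ 1)
    (T : Matrix (m₂ × m₃) (m₂ × m₃) ℂ) (S : Matrix (m₁ × m₂) (m₁ × m₂) ℂ)
    (hT : traceNorm T ≤ 1) (hS : traceNorm S ≤ 1) :
    traceNorm ((A₁ ⊗ₖ T) *
      Matrix.of (fun (x y : m₁ × m₂ × m₃) =>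
        S (x.1, x.2.1) (y.1, y.2.1) * A₃ x.2.2 y.2.2)) ≤ 1 := by
  classical
  set hHS := Matrix.isHermitian_conjTranspose_mul_self S with hHSdef
  set hHT := Matrix.isHermitian_conjTranspose_mul_self T with hHTdef
  set vS : (m₁ × m₂) → (m₁ × m₂) → ℂ := fun i => ⇑(hHS.eigenvectorBasis i) with hvS
  set vT : (m₂ × m₃) → (m₂ × m₃) → ℂ := fun j => ⇑(hHT.eigenvectorBasis j) with hvT
  set p : ((m₁ × m₂) × (m₂ × m₃) × m₂) → (m₁ × m₂ × m₃) → ℂ := fun w x =>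
    (A₁ *ᵥ fun g => (S *ᵥ vS w.1) (g, w.2.2)) x.1 * (T *ᵥ vT w.2.1) x.2 with hp
  set q : ((m₁ × m₂) × (m₂ × m₃) × m₂) → (m₁ × m₂ × m₃) → ℂ := fun w y =>
    vS w.1 (y.1, y.2.1) * (A₃ᴴ *ᵥ fun k => vT w.2.1 (w.2.2, k)) y.2.2 with hq
  have hdecomp : ∀ (a b : m₁ × m₂ × m₃),
      ((A₁ ⊗ₖ T) * Matrix.of (fun (x y : m₁ × m₂ × m₃) =>
        S (x.1, x.2.1) (y.1, y.2.1) * A₃ x.2.2 y.2.2)) a b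
      = ∑ w, p w a * star (q w b) := by
    intro a b
    rw [Matrix.mul_apply]
    have lhs_eq : ∀ z : m₁ × m₂ × m₃,
        (A₁ ⊗ₖ T) a z * Matrix.of (fun (x y : m₁ × m₂ × m₃) =>
          S (x.1, x.2.1) (y.1, y.2.1) * A₃ x.2.2 y.2.2) z b
        = ∑ i, ∑ j, A₁ a.1 z.1 * (S *ᵥ vS i) (z.1, z.2.1) * (T *ᵥ vT j) a.2
            * star (vS i (b.1, b.2.1)) * A₃ z.2.2 b.2.2 * star (vT j (z.2.1, z.2.2)) := by
      intro z
      rw [Matrix.kroneckerMap_apply, Matrix.of_apply,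
        matrix_decomp T a.2 z.2, matrix_decomp S (z.1, z.2.1) (b.1, b.2.1)]
      rw [Finset.mul_sum, Finset.sum_mul, Finset.sum_mul]
      -- now LHS should be a double sum over j (from T) and i (from S); reorder to i,j
      rw [Finset.sum_comm]
      refine Finset.sum_congr rfl fun i _ => ?_
      rw [Finset.mul_sum]
      refine Finset.sum_congr rfl fun j _ => ?_
      ring
    calc ∑ z, (A₁ ⊗ₖ T) a z * Matrix.of (fun (x y : m₁ × m₂ × m₃) =>
          S (x.1, x.2.1) (y.1, y.2.1) * A₃ x.2.2 y.2.2) z b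
        = ∑ i, ∑ j, ∑ h, ∑ g, ∑ k,
            A₁ a.1 g * (S *ᵥ vS i) (g, h) * (T *ᵥ vT j) a.2
            * star (vS i (b.1, b.2.1)) * A₃ k b.2.2 * star (vT j (h, k)) := ?lhs
      _ = ∑ w, p w a * star (q w b) := ?rhs
    case lhs =>
      simp only [lhs_eq]
      rw [Finset.sum_comm]
      refine Finset.sum_congr rfl fun i _ => ?_
      rw [Finset.sum_comm]
      refine Finset.sum_congr rfl fun j _ => ?_
      calc ∑ z : m₁ × m₂ × m₃, A₁ a.1 z.1 * (S *ᵥ vS i) (z.1, z.2.1) * (T *ᵥ vT j) a.2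
            * star (vS i (b.1, b.2.1)) * A₃ z.2.2 b.2.2 * star (vT j (z.2.1, z.2.2))
          = ∑ g, ∑ h, ∑ k, A₁ a.1 g * (S *ᵥ vS i) (g, h) * (T *ᵥ vT j) a.2
            * star (vS i (b.1, b.2.1)) * A₃ k b.2.2 * star (vT j (h, k)) := by
            rw [Fintype.sum_prod_type]
            exact Finset.sum_congr rfl fun g _ => by rw [Fintype.sum_prod_type]
        _ = ∑ h, ∑ g, ∑ k, A₁ a.1 g * (S *ᵥ vS i) (g, h) * (T *ᵥ vT j) a.2
            * star (vS i (b.1, b.2.1)) * A₃ k b.2.2 * star (vT j (h, k)) :=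
            Finset.sum_comm
    case rhs =>
      have hsplit : ∑ w : (m₁ × m₂) × (m₂ × m₃) × m₂, p w a * star (q w b)
          = ∑ i, ∑ j, ∑ h, p (i, j, h) a * star (q (i, j, h) b) := by
        rw [Fintype.sum_prod_type]
        exact Finset.sum_congr rfl fun i _ => by rw [Fintype.sum_prod_type]
      rw [hsplit]
      refine Finset.sum_congr rfl fun i _ => Finset.sum_congr rfl fun j _ =>
        Finset.sum_congr rfl fun h _ => ?_
      have hstar : star ((A₃ᴴ *ᵥ fun k => vT j (h, k)) b.2.2)
          = ∑ k, A₃ k b.2.2 * star (vT j (h, k)) := by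
        simp [mulVec, dotProduct, conjTranspose_apply, star_sum, star_mul', star_star]
      have hA1 : (A₁ *ᵥ fun g => (S *ᵥ vS i) (g, h)) a.1
          = ∑ g, A₁ a.1 g * (S *ᵥ vS i) (g, h) := rfl
      simp only [hp, hq]
      rw [star_mul', hstar, hA1]
      rw [Finset.sum_mul, Finset.sum_mul]
      refine Finset.sum_congr rfl fun g _ => ?_
      rw [Finset.mul_sum, Finset.mul_sum]
      refine Finset.sum_congr rfl fun k _ => ?_
      ring
  calc traceNorm ((A₁ ⊗ₖ T) * Matrix.of (fun (x y : m₁ × m₂ × m₃) =>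
        S (x.1, x.2.1) (y.1, y.2.1) * A₃ x.2.2 y.2.2))
      ≤ ∑ w, ‖ev (p w)‖ * ‖ev (q w)‖ := traceNorm_le_decomp _ p q hdecomp
    _ = ∑ i, ∑ j, ∑ h, ‖ev (p (i, j, h))‖ * ‖ev (q (i, j, h))‖ := by
        rw [Fintype.sum_prod_type]
        exact Finset.sum_congr rfl fun i _ => by rw [Fintype.sum_prod_type]
    _ ≤ ∑ i, ∑ j, Real.sqrt (hHS.eigenvalues i) * Real.sqrt (hHT.eigenvalues j) := by
        refine Finset.sum_le_sum fun i _ => Finset.sum_le_sum fun j _ => ?_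
        set α : m₂ → ℝ := fun h => ‖ev (A₁ *ᵥ fun g => (S *ᵥ vS i) (g, h))‖ with hα
        set β : m₂ → ℝ := fun h => ‖ev (A₃ᴴ *ᵥ fun k => vT j (h, k))‖ with hβ
        have hα1 : ∀ h, α h ≤ ‖ev (fun g => (S *ᵥ vS i) (g, h))‖ := fun h => by
          calc α h ≤ specNorm A₁ * ‖ev (fun g => (S *ᵥ vS i) (g, h))‖ := norm_mulVec_le A₁ _
            _ ≤ 1 * ‖ev (fun g => (S *ᵥ vS i) (g, h))‖ :=
                mul_le_mul_of_nonneg_right hA₁ (norm_nonneg _)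
            _ = _ := one_mul _
        have hβ1 : ∀ h, β h ≤ ‖ev (fun k => vT j (h, k))‖ := fun h => by
          calc β h ≤ specNorm A₃ * ‖ev (fun k => vT j (h, k))‖ :=
                norm_conjTranspose_mulVec_le A₃ _
            _ ≤ 1 * ‖ev (fun k => vT j (h, k))‖ :=
                mul_le_mul_of_nonneg_right hA₃ (norm_nonneg _)
            _ = _ := one_mul _
        have hα2 : ∑ h, α h ^ 2 ≤ hHS.eigenvalues i := by
          calc ∑ h, α h ^ 2 ≤ ∑ h, ‖ev (fun g => (S *ᵥ vS i) (g, h))‖ ^ 2 :=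
              Finset.sum_le_sum fun h _ =>
                pow_le_pow_left₀ (norm_nonneg _) (hα1 h) 2
            _ = ‖ev (S *ᵥ vS i)‖ ^ 2 := sum_slice_snd _
            _ = hHS.eigenvalues i := by
                rw [norm_mulVec_basis S i,
                  Real.sq_sqrt (Matrix.eigenvalues_conjTranspose_mul_self_nonneg S i)]
        have hβ2 : ∑ h, β h ^ 2 ≤ 1 := by
          calc ∑ h, β h ^ 2 ≤ ∑ h, ‖ev (fun k => vT j (h, k))‖ ^ 2 :=
              Finset.sum_le_sum fun h _ =>
                pow_le_pow_left₀ (norm_nonneg _) (hβ1 h) 2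
            _ = ‖ev (vT j)‖ ^ 2 := sum_slice_fst _
            _ = 1 := by rw [norm_ev_basis hHT j]; norm_num
        have hsumnn : (0:ℝ) ≤ ∑ h, α h * β h :=
          Finset.sum_nonneg fun h _ => mul_nonneg (norm_nonneg _) (norm_nonneg _)
        have hsum : ∑ h, α h * β h ≤ Real.sqrt (hHS.eigenvalues i) := by
          have hCS := Finset.sum_mul_sq_le_sq_mul_sq Finset.univ α β
          have h2 : (∑ h, α h * β h) ^ 2 ≤ hHS.eigenvalues i := by
            calc (∑ h, α h * β h) ^ 2 ≤ (∑ h, α h ^ 2) * (∑ h, β h ^ 2) := hCS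
              _ ≤ hHS.eigenvalues i * 1 := mul_le_mul hα2 hβ2
                  (Finset.sum_nonneg fun h _ => by positivity)
                  (Matrix.eigenvalues_conjTranspose_mul_self_nonneg S i)
              _ = hHS.eigenvalues i := mul_one _
          have h3 := Real.sqrt_le_sqrt h2
          rwa [Real.sqrt_sq hsumnn] at h3
        calc ∑ h, ‖ev (p (i, j, h))‖ * ‖ev (q (i, j, h))‖
            = ∑ h, (α h * Real.sqrt (hHT.eigenvalues j)) * (1 * β h) := by
              refine Finset.sum_congr rfl fun h _ => ?_
              simp only [hp, hq]
              rw [norm_ev_prod, norm_ev_prod', norm_mulVec_basis T j, norm_ev_basis hHS i]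
          _ = Real.sqrt (hHT.eigenvalues j) * ∑ h, α h * β h := by
              rw [Finset.mul_sum]
              refine Finset.sum_congr rfl fun h _ => ?_
              ring
          _ ≤ Real.sqrt (hHT.eigenvalues j) * Real.sqrt (hHS.eigenvalues i) :=
              mul_le_mul_of_nonneg_left hsum (Real.sqrt_nonneg _)
          _ = Real.sqrt (hHS.eigenvalues i) * Real.sqrt (hHT.eigenvalues j) := mul_comm _ _
    _ = traceNorm S * traceNorm T := by
        rw [show traceNorm S = ∑ i, Real.sqrt (hHS.eigenvalues i) from rfl,
          show traceNorm T = ∑ j, Real.sqrt (hHT.eigenvalues j) from rfl,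
          Finset.sum_mul_sum]
    _ ≤ 1 := by
        have h1 : 0 ≤ traceNorm T := traceNorm_nonneg T
        calc traceNorm S * traceNorm T ≤ 1 * traceNorm T :=
            mul_le_mul_of_nonneg_right hS h1
          _ = traceNorm T := one_mul _
          _ ≤ 1 := hT
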